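/- Let (Γ, 𝔊, γ) be a measure space, let θ : Γ → Γ be a measurable involution (θ∘θ = id) that preserves γ, let τ ≥ 0, and let (Φ_t)_{t∈[0,τ]} and (Ψ_t)_{t∈[0,τ]} be families of measurable maps Γ → Γ such that Φ_τ preserves γ and such that the time-reversal identity Φ_t(x) = θ(Ψ_{τ−t}(θ(Φ_τ(x)))) holds for all t ∈ [0,τ] and all x ∈ Γ. Let S, Ŝ : Γ → ℝ be measurable functions such that ν := e^{−S}·γ and ν̂ := e^{−Ŝ}·γ are probability measures. Then for every n ≥ 1, all times t_1,…,t_n ∈ [0,τ], and every bounded measurable f : Γⁿ → ℝ, ∫ f(θ(Ψ_{τ−t_1}(x)),…,θ(Ψ_{τ−t_n}(x))) dν̂(x) = ∫ e^{S(x) − Ŝ(θ(Φ_τ(x)))} f(Φ_{t_1}(x),…,Φ_{t_n}(x)) dν(x). -/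

import Mathlib

open MeasureTheory
open scoped NNReal ENNReal

lemma hfr_withDensity_integral {Γ : Type*} [MeasurableSpace Γ] (γ : Measure Γ)
    (h : Γ → ℝ) (hh : Measurable h) (g : Γ → ℝ) :
    ∫ x, g x ∂(γ.withDensity fun x => ENNReal.ofReal (Real.exp (-h x)))
      = ∫ x, Real.exp (-h x) * g x ∂γ := by
  have : (fun x => ENNReal.ofReal (Real.exp (-h x)))
      = fun x => ((Real.toNNReal (Real.exp (-h x)) : ℝ≥0) : ℝ≥0∞) := rfl
  have hm : Measurable fun x => Real.toNNReal (Real.exp (-h x)) := hh.neg.exp.real_toNNReal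
  rw [this, integral_withDensity_eq_integral_smul hm]
  congr 1
  ext x
  simp [NNReal.smul_def, Real.coe_toNNReal _ (Real.exp_nonneg _)]

/-- **Abstract Hamiltonian fluctuation relation.**
`Γ` is the phase space with reference ("Liouville") measure `γ`, `θ` a measurable,
measure-preserving involution (time reversal), `Φ t` the forward flow and `Ψ t` the
time-reversed flow on the time window `[0, τ]`, linked by `Φ t = θ ∘ Ψ (τ−t) ∘ θ ∘ Φ τ`.
For initial probability measures `ν = e^{−S}·γ` and `ν̂ = e^{−Ŝ}·γ`, the time-reversed
finite-dimensional distributions of the reversed process are related to those of the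
forward process by the density `e^{S(x) − Ŝ(θ(Φ τ x))}`. -/
theorem hamiltonian_fluctuation_relation
    {Γ : Type*} [MeasurableSpace Γ] (γ : Measure Γ)
    (θ : Γ → Γ) (hθmeas : Measurable θ) (hθinvol : ∀ x, θ (θ x) = x)
    (hθpres : MeasurePreserving θ γ γ)
    (τ : ℝ) (hτ : 0 ≤ τ)
    (Φ Ψ : ℝ → Γ → Γ)
    (hΦmeas : ∀ t ∈ Set.Icc (0 : ℝ) τ, Measurable (Φ t))
    (hΨmeas : ∀ t ∈ Set.Icc (0 : ℝ) τ, Measurable (Ψ t))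
    (hΦτpres : MeasurePreserving (Φ τ) γ γ)
    (hrev : ∀ t ∈ Set.Icc (0 : ℝ) τ, ∀ x : Γ, Φ t x = θ (Ψ (τ - t) (θ (Φ τ x))))
    (S Shat : Γ → ℝ) (hS : Measurable S) (hShat : Measurable Shat)
    (ν νhat : Measure Γ)
    (hν : ν = γ.withDensity (fun x => ENNReal.ofReal (Real.exp (-S x))))
    (hνhat : νhat = γ.withDensity (fun x => ENNReal.ofReal (Real.exp (-Shat x))))
    (hνprob : IsProbabilityMeasure ν) (hνhatprob : IsProbabilityMeasure νhat)
    (n : ℕ) (hn : 1 ≤ n) (t : Fin n → ℝ) (ht : ∀ i, t i ∈ Set.Icc (0 : ℝ) τ)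
    (f : (Fin n → Γ) → ℝ) (hfmeas : Measurable f)
    (C : ℝ) (hfbdd : ∀ y, |f y| ≤ C) :
    ∫ x, f (fun i => θ (Ψ (τ - t i) x)) ∂νhat
      = ∫ x, Real.exp (S x - Shat (θ (Φ τ x))) * f (fun i => Φ (t i) x) ∂ν := by
  have hΨt : ∀ i, Measurable (Ψ (τ - t i)) := fun i =>
    hΨmeas _ ⟨by linarith [(ht i).2], by linarith [(ht i).1]⟩
  have hΦτ : Measurable (Φ τ) := hΦτpres.measurable
  set T : Γ → Γ := fun x => θ (Φ τ x) with hT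
  have hTmeas : Measurable T := hθmeas.comp hΦτ
  have hTpres : MeasurePreserving T γ γ := hθpres.comp hΦτpres
  have hfm : Measurable fun x => f (fun i => θ (Ψ (τ - t i) x)) :=
    hfmeas.comp (measurable_pi_lambda _ fun i => hθmeas.comp (hΨt i))
  have key : ∀ (g : Γ → ℝ), Measurable g → ∫ x, g x ∂γ = ∫ x, g (T x) ∂γ := by
    intro g hg
    conv_lhs => rw [← hTpres.map_eq]
    exact integral_map hTmeas.aemeasurable hg.aestronglyMeasurable
  rw [hνhat, hν, hfr_withDensity_integral γ Shat hShat,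
    hfr_withDensity_integral γ S hS,
    key (fun x => Real.exp (-Shat x) * f (fun i => θ (Ψ (τ - t i) x)))
      ((hShat.neg.exp).mul hfm)]
  congr 1
  ext x
  have hrev' : ∀ i, θ (Ψ (τ - t i) (T x)) = Φ (t i) x := fun i =>
    (hrev (t i) (ht i) x).symm
  simp only [hT]
  rw [show (fun i => θ (Ψ (τ - t i) (θ (Φ τ x)))) = fun i => Φ (t i) x from
    funext fun i => (hrev (t i) (ht i) x).symm]
  rw [← mul_assoc, ← Real.exp_add]
  ring_nf
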